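/- For σ > 0, γ > 0, the centered Voigt density at zero satisfies p(0) = √(2/π) · (1/σ) · e^{γ²/(2σ²)} · (1 − Φ(γ/σ)); equivalently 2π · p(0) · p'(0) = 1, where p'(0) = [1/(2(1 − Φ(γ/σ)))] · (σ/√(2π)) · e^{−γ²/(2σ²)} is the Dual Voigt density at zero. -/

import Mathlib

open MeasureTheory ProbabilityTheory Real

/-- The standard normal cumulative distribution function. -/
noncomputable def stdNormalCDF (t : ℝ) : ℝ :=
  ∫ s in Set.Iic t, (1 / Real.sqrt (2 * π)) * Real.exp (-s ^ 2 / 2)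

/-- The centered Voigt(γ, σ²) density: the convolution of the Cauchy(0, γ) density with
the N(0, σ²) density. -/
noncomputable def voigtDensity (σ γ : ℝ) (u : ℝ) : ℝ :=
  ∫ x : ℝ, (γ / (π * (x ^ 2 + γ ^ 2))) *
    (1 / (σ * Real.sqrt (2 * π)) * Real.exp (-(u - x) ^ 2 / (2 * σ ^ 2)))

/-- The Dual Voigt(γ, σ²) density. -/
noncomputable def dualVoigtDensity (σ γ : ℝ) (u : ℝ) : ℝ :=
  1 / (2 * (1 - stdNormalCDF (γ / σ))) * (σ / Real.sqrt (2 * π)) *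
    Real.exp (-γ ^ 2 / (2 * σ ^ 2)) * Real.exp (-γ * |u| - σ ^ 2 * u ^ 2 / 2)

section VoigtAux

open Set Filter Complex

lemma cosGauss {b : ℝ} (hb : 0 < b) (s : ℝ) :
    ∫ x : ℝ, Real.cos (s * x) * Real.exp (-b * x ^ 2) =
      Real.sqrt (π / b) * Real.exp (-s ^ 2 / (4 * b)) := by
  have hb' : (0:ℝ) < ((b:ℂ)).re := by simpa using hb
  have h := fourierIntegral_gaussian (b := (b:ℂ)) hb' (s : ℂ)
  have hint : Integrable (fun x : ℝ => Complex.exp (I * (s:ℂ) * x) * Complex.exp (-(b:ℂ) * x ^ 2)) := by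
    have := integrable_cexp_quadratic (b := (b:ℂ)) hb' (I * s) 0
    refine this.congr (Filter.Eventually.of_forall fun x => ?_)
    dsimp only
    rw [← Complex.exp_add]; ring_nf
  have hre : ∫ x : ℝ, (Complex.exp (I * (s:ℂ) * x) * Complex.exp (-(b:ℂ) * x ^ 2)).re
      = ((π / (b:ℂ)) ^ (1 / 2 : ℂ) * Complex.exp (-(s:ℂ) ^ 2 / (4 * b))).re := by
    rw [← RCLike.re_eq_complex_re, integral_re hint, h, RCLike.re_eq_complex_re]
  have hL : ∀ x : ℝ, (Complex.exp (I * (s:ℂ) * x) * Complex.exp (-(b:ℂ) * x ^ 2)).re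
      = Real.cos (s * x) * Real.exp (-b * x ^ 2) := by
    intro x
    rw [← Complex.exp_add, Complex.exp_re]
    have h1 : (I * (s:ℂ) * x + -(b:ℂ) * x ^ 2).re = -b * x ^ 2 := by
      simp [← Complex.ofReal_pow]
    have h2 : (I * (s:ℂ) * x + -(b:ℂ) * x ^ 2).im = s * x := by
      simp [← Complex.ofReal_pow]
    rw [h1, h2, mul_comm]
  have hR : ((π / (b:ℂ)) ^ (1 / 2 : ℂ) * Complex.exp (-(s:ℂ) ^ 2 / (4 * b))).re
      = Real.sqrt (π / b) * Real.exp (-s ^ 2 / (4 * b)) := by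
    have h1 : ((π : ℂ) / b) ^ (1 / 2 : ℂ) = ((Real.sqrt (π / b) : ℝ) : ℂ) := by
      rw [← Complex.ofReal_div, show ((1:ℂ)/2) = ((1/2:ℝ):ℂ) by norm_num,
        ← Complex.ofReal_cpow (by positivity : (0:ℝ) ≤ π / b), Real.rpow_def_of_pos (by positivity)]
      rw [Real.sqrt_eq_rpow, Real.rpow_def_of_pos (by positivity)]
    have h2 : Complex.exp (-(s:ℂ) ^ 2 / (4 * b)) = ((Real.exp (-s ^ 2 / (4 * b)) : ℝ) : ℂ) := by
      rw [Complex.ofReal_exp]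
      norm_cast
    rw [h1, h2, ← Complex.ofReal_mul, Complex.ofReal_re]
  rw [← hR, ← hre]
  exact integral_congr_ae (Filter.Eventually.of_forall fun x => (hL x).symm)

lemma laplaceCos {γ : ℝ} (hγ : 0 < γ) (x : ℝ) :
    ∫ s in Ioi (0:ℝ), Real.exp (-γ * s) * Real.cos (s * x) = γ / (x ^ 2 + γ ^ 2) := by
  have hD : (0:ℝ) < x ^ 2 + γ ^ 2 := by positivity
  set F : ℝ → ℝ := fun s =>
    Real.exp (-γ * s) * (x * Real.sin (s * x) - γ * Real.cos (s * x)) / (x ^ 2 + γ ^ 2) with hF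
  have hderiv : ∀ s ∈ Ici (0:ℝ), HasDerivAt F (Real.exp (-γ * s) * Real.cos (s * x)) s := by
    intro s _
    have h1 : HasDerivAt (fun s : ℝ => Real.exp (-γ * s)) (-γ * Real.exp (-γ * s)) s := by
      have := ((hasDerivAt_id s).const_mul (-γ)).exp
      simpa [mul_comm] using this
    have hsin : HasDerivAt (fun s : ℝ => Real.sin (s * x)) (Real.cos (s * x) * x) s :=
      (hasDerivAt_mul_const x).sin
    have hcos : HasDerivAt (fun s : ℝ => Real.cos (s * x)) (-Real.sin (s * x) * x) s :=
      (hasDerivAt_mul_const x).cos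
    have h2 : HasDerivAt (fun s : ℝ => x * Real.sin (s * x) - γ * Real.cos (s * x))
        (x * (Real.cos (s * x) * x) - γ * (-Real.sin (s * x) * x)) s :=
      (hsin.const_mul x).sub (hcos.const_mul γ)
    have h3 := (h1.mul h2).div_const (x ^ 2 + γ ^ 2)
    refine h3.congr_deriv ?_
    rw [div_eq_iff hD.ne']
    ring
  have hint : IntegrableOn (fun s => Real.exp (-γ * s) * Real.cos (s * x)) (Ioi (0:ℝ)) := by
    refine Integrable.mono (exp_neg_integrableOn_Ioi 0 hγ) ?_ ?_
    · exact (Real.continuous_exp.comp (continuous_const.mul continuous_id)).mul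
        (Real.continuous_cos.comp (continuous_id.mul continuous_const)) |>.aestronglyMeasurable
    · refine Filter.Eventually.of_forall fun s => ?_
      rw [Real.norm_eq_abs, Real.norm_eq_abs, abs_mul, Real.abs_exp]
      calc Real.exp (-γ * s) * |Real.cos (s * x)| ≤ Real.exp (-γ * s) * 1 :=
            mul_le_mul_of_nonneg_left (Real.abs_cos_le_one _) (Real.exp_pos _).le
        _ = Real.exp (-γ * s) := mul_one _
  have htend : Tendsto F atTop (nhds 0) := by
    have h0 : Tendsto (fun s : ℝ => Real.exp (-γ * s)) atTop (nhds 0) := by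
      have h1 : Tendsto (fun s : ℝ => γ * s) atTop atTop :=
        Filter.tendsto_id.const_mul_atTop hγ
      have h2 := Real.tendsto_exp_neg_atTop_nhds_zero.comp h1
      exact h2.congr fun s => by simp [Function.comp, neg_mul]
    have hb : ∀ s : ℝ, |F s| ≤ Real.exp (-γ * s) * ((|x| + γ) / (x ^ 2 + γ ^ 2)) := by
      intro s
      calc |F s| = Real.exp (-γ * s) * |x * Real.sin (s * x) - γ * Real.cos (s * x)| /
            (x ^ 2 + γ ^ 2) := by
            rw [hF]; rw [abs_div, abs_of_pos hD, abs_mul, Real.abs_exp]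
        _ ≤ Real.exp (-γ * s) * (|x| + γ) / (x ^ 2 + γ ^ 2) := by
            gcongr
            calc |x * Real.sin (s * x) - γ * Real.cos (s * x)|
                ≤ |x * Real.sin (s * x)| + |γ * Real.cos (s * x)| := abs_sub _ _
              _ ≤ |x| * 1 + |γ| * 1 := by
                  rw [abs_mul, abs_mul]
                  gcongr
                  · exact Real.abs_sin_le_one _
                  · exact Real.abs_cos_le_one _
              _ = |x| + γ := by rw [mul_one, mul_one, abs_of_pos hγ]
        _ = Real.exp (-γ * s) * ((|x| + γ) / (x ^ 2 + γ ^ 2)) := by ring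
    have hb' : Tendsto (fun s : ℝ => Real.exp (-γ * s) * ((|x| + γ) / (x ^ 2 + γ ^ 2)))
        atTop (nhds 0) := by
      simpa using h0.mul_const ((|x| + γ) / (x ^ 2 + γ ^ 2))
    refine squeeze_zero_norm (fun s => ?_) hb'
    exact hb s
  have := integral_Ioi_of_hasDerivAt_of_tendsto' hderiv hint htend
  rw [this, hF]
  simp
  field_simp

lemma gauss_integrable : Integrable (fun u : ℝ => Real.exp (-u ^ 2 / 2)) := by
  have := integrable_exp_neg_mul_sq (by norm_num : (0:ℝ) < 1/2)
  refine this.congr (Filter.Eventually.of_forall fun u => ?_)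
  ring_nf

lemma gauss_total : ∫ u : ℝ, Real.exp (-u ^ 2 / 2) = Real.sqrt (2 * π) := by
  have h := integral_gaussian (1/2 : ℝ)
  rw [show ∫ u : ℝ, Real.exp (-u ^ 2 / 2) = ∫ u : ℝ, Real.exp (-(1/2) * u ^ 2) from
    integral_congr_ae (Filter.Eventually.of_forall fun u => by ring_nf), h]
  rw [div_div_eq_mul_div, div_one, mul_comm]

lemma gaussTail (t : ℝ) :
    ∫ u in Ioi t, Real.exp (-u ^ 2 / 2) = Real.sqrt (2 * π) * (1 - stdNormalCDF t) := by
  have hcdf : stdNormalCDF t = (1 / Real.sqrt (2 * π)) * ∫ s in Iic t, Real.exp (-s ^ 2 / 2) := by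
    rw [stdNormalCDF, integral_const_mul]
  have hsplit := intervalIntegral.integral_Iic_add_Ioi (b := t) (f := fun u : ℝ => Real.exp (-u ^ 2 / 2))
    gauss_integrable.integrableOn gauss_integrable.integrableOn
  rw [gauss_total] at hsplit
  have hπ : (0:ℝ) < Real.sqrt (2 * π) := Real.sqrt_pos.2 (by positivity)
  rw [hcdf, mul_sub, mul_one, ← mul_assoc, mul_one_div, div_self hπ.ne', one_mul]
  linarith [hsplit]

lemma gaussTailPos (t : ℝ) : 0 < ∫ u in Ioi t, Real.exp (-u ^ 2 / 2) := by
  rw [setIntegral_pos_iff_support_of_nonneg_ae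
    (Filter.Eventually.of_forall fun u => (Real.exp_pos _).le) gauss_integrable.integrableOn]
  have : Function.support (fun u : ℝ => Real.exp (-u ^ 2 / 2)) = univ := by
    ext u; simp [Real.exp_ne_zero]
  rw [this, univ_inter]
  exact Measure.measure_Ioi_pos (volume : Measure ℝ) t

lemma shift_Ioi (f : ℝ → ℝ) (a c : ℝ) :
    ∫ x in Ioi a, f (x + c) = ∫ x in Ioi (a + c), f x := by
  rw [← integral_indicator measurableSet_Ioi, ← integral_indicator measurableSet_Ioi,
    ← integral_add_right_eq_self (fun x => (Ioi (a + c)).indicator f x) c]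
  congr 1
  ext x
  simp only [indicator_apply, mem_Ioi, add_lt_add_iff_right]

lemma tailInt {σ γ : ℝ} (hσ : 0 < σ) (_hγ : 0 < γ) :
    ∫ s in Ioi (0:ℝ), Real.exp (-γ * s - σ ^ 2 * s ^ 2 / 2) =
      Real.exp (γ ^ 2 / (2 * σ ^ 2)) * σ⁻¹ * ∫ u in Ioi (γ / σ), Real.exp (-u ^ 2 / 2) := by
  have hpt : ∀ s : ℝ, Real.exp (-γ * s - σ ^ 2 * s ^ 2 / 2) =
      Real.exp (γ ^ 2 / (2 * σ ^ 2)) * Real.exp (-(σ * s + γ / σ) ^ 2 / 2) := by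
    intro s
    rw [← Real.exp_add]
    congr 1
    field_simp
    ring
  rw [setIntegral_congr_fun measurableSet_Ioi (fun s _ => hpt s), integral_const_mul]
  have h1 := integral_comp_mul_left_Ioi (fun u => Real.exp (-(u + γ / σ) ^ 2 / 2)) 0 hσ
  simp only [mul_zero, smul_eq_mul] at h1
  have h2 := shift_Ioi (fun u => Real.exp (-u ^ 2 / 2)) 0 (γ / σ)
  simp only [zero_add] at h2
  rw [h1, h2, ← mul_assoc]

lemma voigt_key {σ γ : ℝ} (hσ : 0 < σ) (hγ : 0 < γ) :
    ∫ x : ℝ, (γ / (π * (x ^ 2 + γ ^ 2))) *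
        (1 / (σ * Real.sqrt (2 * π)) * Real.exp (-x ^ 2 / (2 * σ ^ 2))) =
      Real.sqrt (2 / π) * (1 / σ) * Real.exp (γ ^ 2 / (2 * σ ^ 2)) *
        (1 - stdNormalCDF (γ / σ)) := by
  have hπ : (0:ℝ) < π := Real.pi_pos
  have hs2π : (0:ℝ) < Real.sqrt (2 * π) := Real.sqrt_pos.2 (by positivity)
  set c : ℝ := 1 / (π * σ * Real.sqrt (2 * π)) with hc
  set F : ℝ → ℝ → ℝ := fun x s =>
    (c * Real.exp (-x ^ 2 / (2 * σ ^ 2))) * (Real.exp (-γ * s) * Real.cos (s * x)) with hFdef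
  -- step 1: rewrite integrand
  have hx : ∀ x : ℝ, (γ / (π * (x ^ 2 + γ ^ 2))) *
      (1 / (σ * Real.sqrt (2 * π)) * Real.exp (-x ^ 2 / (2 * σ ^ 2))) =
      ∫ s in Ioi (0:ℝ), F x s := by
    intro x
    have hD : (0:ℝ) < x ^ 2 + γ ^ 2 := by positivity
    rw [show (∫ s in Ioi (0:ℝ), F x s) = (c * Real.exp (-x ^ 2 / (2 * σ ^ 2))) *
        ∫ s in Ioi (0:ℝ), Real.exp (-γ * s) * Real.cos (s * x) from integral_const_mul _ _,
      laplaceCos hγ x, hc]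
    field_simp
  -- Fubini integrability
  have hgauss : Integrable (fun x : ℝ => Real.exp (-x ^ 2 / (2 * σ ^ 2))) := by
    have := integrable_exp_neg_mul_sq (show (0:ℝ) < 1 / (2 * σ ^ 2) by positivity)
    exact this.congr (Filter.Eventually.of_forall fun x => by ring_nf)
  have hexp : IntegrableOn (fun s : ℝ => Real.exp (-γ * s)) (Ioi 0) :=
    exp_neg_integrableOn_Ioi 0 hγ
  have hIg : Integrable (fun z : ℝ × ℝ => (c * Real.exp (-z.1 ^ 2 / (2 * σ ^ 2))) *
      Real.exp (-γ * z.2)) (volume.prod (volume.restrict (Ioi 0))) :=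
    Integrable.mul_prod (hgauss.const_mul c) hexp
  have hIF : Integrable (Function.uncurry F) (volume.prod (volume.restrict (Ioi 0))) := by
    refine hIg.mono ?_ (Filter.Eventually.of_forall fun z => ?_)
    · apply Continuous.aestronglyMeasurable
      fun_prop
    · simp only [Function.uncurry, hFdef, Real.norm_eq_abs, abs_mul, Real.abs_exp]
      have h1 : Real.exp (-γ * z.2) * |Real.cos (z.2 * z.1)| ≤ Real.exp (-γ * z.2) :=
        (mul_le_mul_of_nonneg_left (Real.abs_cos_le_one _) (Real.exp_pos _).le).trans_eq
          (mul_one _)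
      exact mul_le_mul_of_nonneg_left h1
        (by positivity : (0:ℝ) ≤ |c| * Real.exp (-z.1 ^ 2 / (2 * σ ^ 2)))
  have hswap : ∫ x : ℝ, ∫ s in Ioi (0:ℝ), F x s =
      ∫ s in Ioi (0:ℝ), ∫ x : ℝ, F x s := integral_integral_swap hIF
  -- inner integral in x
  have hinner : ∀ s : ℝ, ∫ x : ℝ, F x s = (1 / π) * Real.exp (-γ * s - σ ^ 2 * s ^ 2 / 2) := by
    intro s
    have hb : (0:ℝ) < 1 / (2 * σ ^ 2) := by positivity
    have hcg := cosGauss hb s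
    have h1 : (fun x : ℝ => F x s) = fun x : ℝ => (c * Real.exp (-γ * s)) *
        (Real.cos (s * x) * Real.exp (-(1 / (2 * σ ^ 2)) * x ^ 2)) := by
      funext x
      rw [hFdef]
      rw [show -(1 / (2 * σ ^ 2)) * x ^ 2 = -x ^ 2 / (2 * σ ^ 2) by ring]
      ring
    rw [h1, integral_const_mul, hcg]
    have h2 : Real.sqrt (π / (1 / (2 * σ ^ 2))) = σ * Real.sqrt (2 * π) := by
      rw [show π / (1 / (2 * σ ^ 2)) = σ ^ 2 * (2 * π) by field_simp,
        Real.sqrt_mul (sq_nonneg σ), Real.sqrt_sq hσ.le]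
    have h3 : -s ^ 2 / (4 * (1 / (2 * σ ^ 2))) = -(σ ^ 2 * s ^ 2 / 2) := by
      field_simp
      ring
    rw [h2, h3, hc]
    rw [show -γ * s - σ ^ 2 * s ^ 2 / 2 = -γ * s + -(σ ^ 2 * s ^ 2 / 2) by ring, Real.exp_add]
    field_simp
  calc ∫ x : ℝ, (γ / (π * (x ^ 2 + γ ^ 2))) *
        (1 / (σ * Real.sqrt (2 * π)) * Real.exp (-x ^ 2 / (2 * σ ^ 2)))
      = ∫ x : ℝ, ∫ s in Ioi (0:ℝ), F x s := integral_congr_ae (.of_forall hx)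
    _ = ∫ s in Ioi (0:ℝ), ∫ x : ℝ, F x s := hswap
    _ = ∫ s in Ioi (0:ℝ), (1 / π) * Real.exp (-γ * s - σ ^ 2 * s ^ 2 / 2) :=
        integral_congr_ae (.of_forall fun s => hinner s)
    _ = (1 / π) * ∫ s in Ioi (0:ℝ), Real.exp (-γ * s - σ ^ 2 * s ^ 2 / 2) :=
        integral_const_mul _ _
    _ = (1 / π) * (Real.exp (γ ^ 2 / (2 * σ ^ 2)) * σ⁻¹ *
        (Real.sqrt (2 * π) * (1 - stdNormalCDF (γ / σ)))) := by
        rw [tailInt hσ hγ, gaussTail]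
    _ = Real.sqrt (2 / π) * (1 / σ) * Real.exp (γ ^ 2 / (2 * σ ^ 2)) *
        (1 - stdNormalCDF (γ / σ)) := by
        have h4 : Real.sqrt (2 / π) = Real.sqrt (2 * π) / π := by
          rw [show (2:ℝ) / π = (2 * π) / π ^ 2 by field_simp,
            Real.sqrt_div (by positivity) _, Real.sqrt_sq hπ.le]
        rw [h4]
        field_simp

end VoigtAux

section VoigtMain

open Set Filter

/-- the centered Voigt density at zero equals
√(2/π)·(1/σ)·exp(γ²/(2σ²))·(1 − Φ(γ/σ)); equivalently 2π · p(0) · p'(0) = 1, where p'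
is the Dual Voigt density. -/
theorem voigt_at_zero (σ γ : ℝ) (hσ : 0 < σ) (hγ : 0 < γ) :
    voigtDensity σ γ 0 =
      Real.sqrt (2 / π) * (1 / σ) * Real.exp (γ ^ 2 / (2 * σ ^ 2)) *
        (1 - stdNormalCDF (γ / σ)) ∧
    2 * π * voigtDensity σ γ 0 * dualVoigtDensity σ γ 0 = 1 := by
  have hπ : (0:ℝ) < π := Real.pi_pos
  have hs2π : (0:ℝ) < Real.sqrt (2 * π) := Real.sqrt_pos.2 (by positivity)
  have h1 : voigtDensity σ γ 0 =
      Real.sqrt (2 / π) * (1 / σ) * Real.exp (γ ^ 2 / (2 * σ ^ 2)) *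
        (1 - stdNormalCDF (γ / σ)) := by
    rw [voigtDensity, ← voigt_key hσ hγ]
    exact integral_congr_ae (.of_forall fun x => by ring_nf)
  refine ⟨h1, ?_⟩
  have hT : 0 < 1 - stdNormalCDF (γ / σ) := by
    have h2 := gaussTailPos (γ / σ)
    rw [gaussTail] at h2
    nlinarith
  have h4 : Real.sqrt (2 / π) = Real.sqrt (2 * π) / π := by
    rw [show (2:ℝ) / π = (2 * π) / π ^ 2 by field_simp,
      Real.sqrt_div (by positivity) _, Real.sqrt_sq hπ.le]
  have hEA : Real.exp (γ ^ 2 / (2 * σ ^ 2)) * Real.exp (-γ ^ 2 / (2 * σ ^ 2)) = 1 := by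
    rw [← Real.exp_add, show γ ^ 2 / (2 * σ ^ 2) + -γ ^ 2 / (2 * σ ^ 2) = 0 by ring, Real.exp_zero]
  rw [h1, dualVoigtDensity]
  rw [show -γ * |(0:ℝ)| - σ ^ 2 * (0:ℝ) ^ 2 / 2 = 0 by simp, Real.exp_zero, h4]
  rw [Real.sqrt_mul (by norm_num : (0:ℝ) ≤ 2)]
  field_simp
  linear_combination (by rw [← Real.exp_add, add_neg_cancel, Real.exp_zero] :
    Real.exp (γ ^ 2 / (2 * σ ^ 2)) * Real.exp (-(γ ^ 2 / (2 * σ ^ 2))) = 1)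

end VoigtMain
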